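/- Let δ > 2 and suppose the solution of the IDM system has a blow-up time t* > 0 of the velocity, i.e. lim_{t→t*⁻} v(t) = lim_{t→t*⁻} ẋ(t) = −∞. Then the velocity is integrable, v ∈ L¹((0,t*)), and equivalently the position remains finite at blow-up: there exists c ∈ ℝ with lim_{t→t*⁻} x(t) = c. -/

import Mathlib

open MeasureTheory Set Filter

/-- The IDM acceleration function. -/
noncomputable def IDMAcc (a b vfree τ s₀ l δ : ℝ) (x v xl vl : ℝ) : ℝ :=
  a * (1 - (|v| / vfree) ^ δ -
    ((2 * Real.sqrt (a * b) * (s₀ + v * τ) + v * (v - vl)) /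
      (2 * Real.sqrt (a * b) * (xl - x - l))) ^ 2)

/-- **Boundedness of the position in the case of a blow-up of the velocity.**
Let `δ > 2` and suppose the follower solves the IDM dynamics on `[0, t*)`
(against a leader with nonnegative, bounded velocity and positive gap) and
its velocity blows down, `v(t) → −∞` as `t → t*⁻`. Then `v ∈ L¹((0,t*))`
and the position converges to a finite limit `c` as `t → t*⁻`. -/
theorem idm_position_bounded_at_blow_up
    (a b vfree s₀ l δ τ tstar : ℝ)
    (ha : 0 < a) (hb : 0 < b) (hvf : 0 < vfree) (hs₀ : 0 < s₀) (hl : 0 < l)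
    (hτ : 0 < τ) (hδ : 2 < δ) (htstar : 0 < tstar)
    (x v xl vl : ℝ → ℝ)
    (hvl_nonneg : ∀ t ∈ Ico (0:ℝ) tstar, 0 ≤ vl t)
    (hvl_bdd : ∃ M : ℝ, ∀ t ∈ Ico (0:ℝ) tstar, |vl t| ≤ M)
    (hgap : ∀ t ∈ Ico (0:ℝ) tstar, 0 < xl t - x t - l)
    (hx : ∀ t ∈ Ico (0:ℝ) tstar, HasDerivAt x (v t) t)
    (hv : ∀ t ∈ Ico (0:ℝ) tstar,
      HasDerivAt v (IDMAcc a b vfree τ s₀ l δ (x t) (v t) (xl t) (vl t)) t)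
    (hblow : Tendsto v (nhdsWithin tstar (Iio tstar)) atBot) :
    IntegrableOn v (Ioo 0 tstar) volume ∧
    ∃ c : ℝ, Tendsto x (nhdsWithin tstar (Iio tstar)) (nhds c) := by
  -- continuity of `v` on `[0, t*)`
  have hvc : ContinuousOn v (Ico 0 tstar) := fun t ht =>
    ((hv t ht).continuousAt).continuousWithinAt
  -- threshold
  set W : ℝ := max (vfree * (2 : ℝ) ^ (1/δ)) 1 with hWdef
  have hW1 : (1:ℝ) ≤ W := le_max_right _ _
  have hWpos : 0 < W := lt_of_lt_of_le one_pos hW1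
  have hδ0 : (0:ℝ) < δ := by linarith
  have hδ1 : (1:ℝ) < δ := by linarith
  -- threshold property : if W ≤ y then 2 ≤ (y / vfree) ^ δ
  have hthresh : ∀ y : ℝ, W ≤ y → (2:ℝ) ≤ (y / vfree) ^ δ := by
    intro y hy
    have h1 : vfree * (2:ℝ) ^ (1/δ) ≤ y := le_trans (le_max_left _ _) hy
    have h2 : (2:ℝ) ^ (1/δ) ≤ y / vfree := (le_div_iff₀ hvf).2 (by linarith [h1])
    have h3 : ((2:ℝ) ^ (1/δ)) ^ δ ≤ (y / vfree) ^ δ :=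
      Real.rpow_le_rpow (Real.rpow_nonneg (by norm_num) _) h2 hδ0.le
    calc (2:ℝ) = ((2:ℝ) ^ (1/δ)) ^ δ := by
          rw [← Real.rpow_mul (by norm_num), one_div, inv_mul_cancel₀ (ne_of_gt hδ0),
            Real.rpow_one]
      _ ≤ _ := h3
  -- find `t₀ ∈ [0, t*)` with `v ≤ -W` on `(t₀, t*)`
  obtain ⟨t₀, ht₀lt, ht₀0, hWle⟩ :
      ∃ t₀, t₀ < tstar ∧ 0 ≤ t₀ ∧ ∀ t ∈ Ioo t₀ tstar, v t ≤ -W := by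
    have hev : ∀ᶠ t in nhdsWithin tstar (Iio tstar), v t ≤ -W := hblow.eventually_le_atBot _
    rw [eventually_iff, mem_nhdsLT_iff_exists_Ioo_subset'
      (show tstar - 1 < tstar by linarith)] at hev
    obtain ⟨l', hl', hsub⟩ := hev
    refine ⟨max l' 0, max_lt_iff.2 ⟨hl', htstar⟩, le_max_right _ _, ?_⟩
    intro t ht
    exact hsub ⟨lt_of_le_of_lt (le_max_left _ _) ht.1, ht.2⟩
  -- notation
  set S : Set ℝ := Ioo t₀ tstar with hSdef
  have hSsub : S ⊆ Ico 0 tstar := fun t ht => ⟨le_trans ht₀0 ht.1.le, ht.2⟩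
  have hvneg : ∀ t ∈ S, v t ≤ -W := hWle
  have hvpos : ∀ t ∈ S, 0 < -v t := fun t ht => by
    have := hvneg t ht; linarith [hWpos]
  -- the constant C
  set C : ℝ := (δ - 1) * (a / 2) * (vfree ^ δ)⁻¹ with hCdef
  have hvfδ : (0:ℝ) < vfree ^ δ := Real.rpow_pos_of_pos hvf δ
  have hCpos : 0 < C := by
    apply mul_pos (mul_pos (by linarith) (by linarith)) (inv_pos.2 hvfδ)
  -- the function f = (-v) ^ (1 - δ)
  set f : ℝ → ℝ := fun t => (-v t) ^ (1 - δ) with hfdef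
  set g : ℝ → ℝ := fun t => f t + C * t with hgdef
  -- derivative bound
  have hderiv : ∀ t ∈ S, HasDerivAt g
      ((-(IDMAcc a b vfree τ s₀ l δ (x t) (v t) (xl t) (vl t))) * (1 - δ) *
        (-v t) ^ (1 - δ - 1) + C) t := by
    intro t ht
    have h1 : HasDerivAt (fun s => -v s)
        (-(IDMAcc a b vfree τ s₀ l δ (x t) (v t) (xl t) (vl t))) t :=
      (hv t (hSsub ht)).neg
    have h2 := h1.rpow_const (p := 1 - δ) (Or.inl (ne_of_gt (hvpos t ht)))
    have h3 := h2.add ((hasDerivAt_id t).const_mul C)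
    simpa [hgdef, hfdef, mul_one, Pi.add_def] using h3
  have hderiv_le : ∀ t ∈ S,
      (-(IDMAcc a b vfree τ s₀ l δ (x t) (v t) (xl t) (vl t))) * (1 - δ) *
        (-v t) ^ (1 - δ - 1) + C ≤ 0 := by
    intro t ht
    have hwpos := hvpos t ht
    have habs : |v t| = -v t := abs_of_neg (by linarith)
    -- the acceleration bound : -Acc ≥ (a/2) * ((-v)/vfree)^δ
    have hsq : (0:ℝ) ≤ ((2 * Real.sqrt (a * b) * (s₀ + v t * τ) + v t * (v t - vl t)) /
        (2 * Real.sqrt (a * b) * (xl t - x t - l))) ^ 2 := sq_nonneg _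
    have h2le : (2:ℝ) ≤ (-v t / vfree) ^ δ := hthresh _ (by linarith [hvneg t ht])
    have hAcc : (a / 2) * ((-v t) / vfree) ^ δ ≤
        -(IDMAcc a b vfree τ s₀ l δ (x t) (v t) (xl t) (vl t)) := by
      rw [IDMAcc, habs]
      nlinarith [h2le, hsq]
    -- multiply by the nonpositive factor
    have hfac : (1 - δ) * (-v t) ^ (1 - δ - 1) ≤ 0 := by
      apply mul_nonpos_of_nonpos_of_nonneg (by linarith)
      exact Real.rpow_nonneg hwpos.le _
    have key : (-(IDMAcc a b vfree τ s₀ l δ (x t) (v t) (xl t) (vl t))) * ((1 - δ) *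
        (-v t) ^ (1 - δ - 1)) ≤ ((a / 2) * ((-v t) / vfree) ^ δ) * ((1 - δ) *
        (-v t) ^ (1 - δ - 1)) := by
      exact mul_le_mul_of_nonpos_right hAcc hfac
    have hcomp : ((a / 2) * ((-v t) / vfree) ^ δ) * ((1 - δ) *
        (-v t) ^ (1 - δ - 1)) = -C := by
      rw [Real.div_rpow hwpos.le hvf.le]
      have h1 : (1 : ℝ) - δ - 1 = -δ := by ring
      rw [h1, Real.rpow_neg hwpos.le]
      have hne : (-v t) ^ δ ≠ 0 := ne_of_gt (Real.rpow_pos_of_pos hwpos δ)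
      field_simp [hCdef]
      rw [hCdef]; field_simp; ring
    have key2 : (-(IDMAcc a b vfree τ s₀ l δ (x t) (v t) (xl t) (vl t))) * (1 - δ) *
        (-v t) ^ (1 - δ - 1) ≤ -C := by
      rw [mul_assoc, ← hcomp]; exact key
    linarith
  -- g is antitone on S
  have hganti : AntitoneOn g S := by
    apply antitoneOn_of_deriv_nonpos (convex_Ioo _ _)
    · exact fun t ht => (hderiv t ht).continuousAt.continuousWithinAt
    · intro t ht
      rw [interior_Ioo] at ht
      exact (hderiv t ht).differentiableAt.differentiableWithinAt
    · intro t ht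
      rw [interior_Ioo] at ht
      rw [(hderiv t ht).deriv]
      exact hderiv_le t ht
  -- pointwise bound : C * (tstar - t) ≤ f t  for t ∈ S
  have hfge : ∀ t ∈ S, C * (tstar - t) ≤ f t := by
    intro t ht
    haveI hne : (nhdsWithin tstar (Iio tstar)).NeBot := nhdsLT_neBot tstar
    have htd : Tendsto (fun s => C * (s - t)) (nhdsWithin tstar (Iio tstar))
        (nhds (C * (tstar - t))) :=
      ((continuous_const.mul (continuous_id.sub continuous_const)).tendsto
        tstar).mono_left nhdsWithin_le_nhds
    refine le_of_tendsto htd ?_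
    filter_upwards [Ioo_mem_nhdsLT_of_mem (⟨ht.2, le_refl tstar⟩ : tstar ∈ Ioc t tstar)]
      with s hs
    have hsS : s ∈ S := ⟨lt_trans ht.1 hs.1, hs.2⟩
    have hg2 := hganti ht hsS hs.1.le
    have hfs : 0 ≤ f s := Real.rpow_nonneg (hvpos s hsS).le _
    simp only [hgdef] at hg2
    nlinarith
  -- pointwise bound on -v
  have hvle : ∀ t ∈ S, -v t ≤ (C ^ ((1 - δ)⁻¹)) * ((tstar - t) ^ ((1 - δ)⁻¹)) := by
    intro t ht
    have hwpos := hvpos t ht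
    have hCt : 0 < C * (tstar - t) := mul_pos hCpos (by linarith [ht.2])
    have h1 : ((-v t) ^ (1 - δ)) ^ ((1 - δ)⁻¹) ≤ (C * (tstar - t)) ^ ((1 - δ)⁻¹) :=
      Real.rpow_le_rpow_of_nonpos hCt (hfge t ht) (by
        rw [inv_nonpos]; linarith)
    rw [← Real.rpow_mul hwpos.le, mul_inv_cancel₀ (by linarith : (1:ℝ) - δ ≠ 0),
      Real.rpow_one] at h1
    rw [← Real.mul_rpow hCpos.le (by linarith [ht.2] : (0:ℝ) ≤ tstar - t)]
    exact h1
  -- integrability of the bound on S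
  have hq : (-1 : ℝ) < (1 - δ)⁻¹ := by
    have h1 : (1:ℝ) - δ < -1 := by linarith
    have hne : (1:ℝ) - δ ≠ 0 := by linarith
    have h3 : (1 - δ) * (1 - δ)⁻¹ = 1 := mul_inv_cancel₀ hne
    nlinarith [h3, h1]
  have hbd_int : IntegrableOn
      (fun t => (C ^ ((1 - δ)⁻¹)) * ((tstar - t) ^ ((1 - δ)⁻¹))) S volume := by
    have h1 : IntervalIntegrable (fun s : ℝ => s ^ ((1 - δ)⁻¹)) volume 0 (tstar - t₀) :=
      intervalIntegral.intervalIntegrable_rpow' hq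
    have h2 := h1.comp_sub_left tstar
    simp only [sub_zero, sub_sub_cancel] at h2
    have h3 := h2.symm
    rw [intervalIntegrable_iff_integrableOn_Ioo_of_le ht₀lt.le] at h3
    exact (h3.const_mul _)
  -- measurability of v on S
  have hvmeas : AEStronglyMeasurable v (volume.restrict S) := by
    apply ContinuousOn.aestronglyMeasurable (hvc.mono hSsub) measurableSet_Ioo
  -- integrability of v on S
  have hIntS : IntegrableOn v S volume := by
    apply Integrable.mono' hbd_int hvmeas
    rw [ae_restrict_iff' measurableSet_Ioo]
    filter_upwards with t
    intro ht
    rw [Real.norm_eq_abs, abs_of_neg (by linarith [hvpos t ht] : v t < 0)]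
    exact hvle t ht
  -- integrability of v on (0, t₀]
  have hInt0 : IntegrableOn v (Ioc 0 t₀) volume := by
    have : IntegrableOn v (Icc 0 t₀) volume :=
      (hvc.mono (fun s hs => ⟨hs.1, lt_of_le_of_lt hs.2 ht₀lt⟩)).integrableOn_Icc
    exact this.mono_set Ioc_subset_Icc_self
  -- conclusion part 1
  have hmain : IntegrableOn v (Ioo 0 tstar) volume := by
    apply (hInt0.union hIntS).mono_set
    intro s hs
    rcases le_or_gt s t₀ with h | h
    · exact Or.inl ⟨hs.1, h⟩
    · exact Or.inr ⟨h, hs.2⟩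
  refine ⟨hmain, ?_⟩
  -- part 2 : convergence of x
  have hIoc : IntegrableOn v (Ioc 0 tstar) volume :=
    hmain.congr_set_ae Ioo_ae_eq_Ioc.symm
  have hII : IntervalIntegrable v volume 0 tstar := by
    rw [intervalIntegrable_iff_integrableOn_Ioc_of_le htstar.le]; exact hIoc
  set F : ℝ → ℝ := fun t => ∫ s in (0:ℝ)..t, v s with hFdef
  have hFcont : ContinuousWithinAt F (Icc 0 tstar) tstar := by
    apply intervalIntegral.continuousWithinAt_primitive (Real.volume_singleton)
    rw [min_self, max_eq_right htstar.le]
    exact hII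
  have hFt : Tendsto F (nhdsWithin tstar (Iio tstar)) (nhds (F tstar)) := by
    have := hFcont.tendsto
    rw [← nhdsWithin_Ioo_eq_nhdsLT htstar]
    exact this.mono_left (nhdsWithin_mono _ Ioo_subset_Icc_self)
  refine ⟨x 0 + F tstar, ?_⟩
  have hxeq : ∀ᶠ t in nhdsWithin tstar (Iio tstar), x 0 + F t = x t := by
    filter_upwards [Ioo_mem_nhdsLT_of_mem (⟨htstar, le_refl tstar⟩ : tstar ∈ Ioc 0 tstar)]
      with t ht
    have huIcc : uIcc (0:ℝ) t = Icc 0 t := uIcc_of_le ht.1.le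
    have hsub : Icc (0:ℝ) t ⊆ Ico 0 tstar := fun s hs => ⟨hs.1, lt_of_le_of_lt hs.2 ht.2⟩
    have hFt2 : ∫ s in (0:ℝ)..t, v s = x t - x 0 := by
      apply intervalIntegral.integral_eq_sub_of_hasDerivAt
      · intro s hs
        rw [huIcc] at hs
        exact hx s (hsub hs)
      · exact (hvc.mono (huIcc ▸ hsub)).intervalIntegrable
    simp only [hFdef]
    rw [hFt2]; ring
  exact Tendsto.congr' hxeq (tendsto_const_nhds.add hFt)
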